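/- There exists a metric space (X,d) whose underlying topological space is a Cantor space, such that (X,d) is not doubling, is uniformly disconnected, and is uniformly perfect (i.e., has type (0,1,1)), and such that the set S_D(X,d) of points of X having no doubling neighborhood is a singleton. -/

import Mathlib

open Metric Set
open scoped ENNReal NNReal

noncomputable section

/-- A metric space is doubling if there is `N` such that every closed ball of radius `r`
can be covered by at most `N` closed balls of radius `r / 2`. -/
def IsDoubling (X : Type*) [MetricSpace X] : Prop :=
  ∃ N : ℕ, ∀ (x : X) (r : ℝ), ∃ c : Finset X, c.card ≤ N ∧
    Metric.closedBall x r ⊆ ⋃ y ∈ c, Metric.closedBall y (r / 2)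

/-- Every `δ`-chain is trivial (constant). -/
def IsUniformlyDisconnectedWith (X : Type*) [MetricSpace X] (δ : ℝ) : Prop :=
  ∀ (N : ℕ) (x : ℕ → X),
    (∀ i : ℕ, 1 ≤ i → i ≤ N → dist (x (i - 1)) (x i) ≤ δ * dist (x 0) (x N)) →
    ∀ i ≤ N, x i = x 0

def IsUniformlyDisconnected (X : Type*) [MetricSpace X] : Prop :=
  ∃ δ : ℝ, 0 < δ ∧ δ < 1 ∧ IsUniformlyDisconnectedWith X δ

/-- `ρ`-uniform perfectness. -/
def IsUniformlyPerfectWith (X : Type*) [MetricSpace X] (ρ : ℝ) : Prop :=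
  ∀ (x : X) (r : ℝ), 0 < r → r < Metric.diam (Set.univ : Set X) →
    (Metric.closedBall x r \ Metric.ball x (ρ * r)).Nonempty

def IsUniformlyPerfect (X : Type*) [MetricSpace X] : Prop :=
  ∃ ρ : ℝ, 0 < ρ ∧ ρ ≤ 1 ∧ IsUniformlyPerfectWith X ρ

/-- A metric space has type `(u, v, w) ∈ {0,1}³` (here encoded by `Bool`s) if `u = 1` exactly
when it is doubling, `v = 1` exactly when it is uniformly disconnected, and `w = 1` exactly
when it is uniformly perfect. -/
def HasType (X : Type*) [MetricSpace X] (u v w : Bool) : Prop :=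
  (IsDoubling X ↔ u = true) ∧ (IsUniformlyDisconnected X ↔ v = true) ∧
    (IsUniformlyPerfect X ↔ w = true)

/-- `S_D`: points having no doubling neighborhood. -/
def SD (X : Type*) [MetricSpace X] : Set X :=
  {x : X | ∀ s ∈ nhds x, ¬ IsDoubling ↥s}

/-- `S_UD`: points having no uniformly disconnected neighborhood. -/
def SUD (X : Type*) [MetricSpace X] : Set X :=
  {x : X | ∀ s ∈ nhds x, ¬ IsUniformlyDisconnected ↥s}

/-- `S_UP`: points having no uniformly perfect neighborhood. -/
def SUP (X : Type*) [MetricSpace X] : Set X :=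
  {x : X | ∀ s ∈ nhds x, ¬ IsUniformlyPerfect ↥s}

/-- The ternary correspondence map `T(x) = Σ_{i≥1} 2 x_i / 3^i` (indices shifted to start
at `0`). -/
def cantorT (x : ℕ → Bool) : ℝ :=
  ∑' i : ℕ, 2 * (if x i then (1 : ℝ) else 0) / 3 ^ (i + 1)

/-- A Cantor space: a topological space homeomorphic to the middle-third Cantor set
(`cantorSet` is Mathlib's middle-third Cantor set in `ℝ`). -/
def IsCantorSpace (X : Type*) [TopologicalSpace X] : Prop :=
  Nonempty (X ≃ₜ ↥cantorSet)

/-- The first index at which `x` and `y` differ. -/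
def seqV (x y : ℕ → Bool) : ℕ := sInf {n | x n ≠ y n}

-- The standard ultrametric `e(x,y) = 3^{-(v(x,y)+1)}` on `2^ℕ` (indices starting at `0`,
-- corresponding to `3^{-min{n ≥ 1 : x_n ≠ y_n}}` with indices starting at `1`).
open Classical in
def cantorE (x y : ℕ → Bool) : ℝ :=
  if x = y then 0 else (3 : ℝ)⁻¹ ^ (seqV x y + 1)

/-- A shrinking sequence: positive, non-increasing, converging to `0`. -/
def IsShrinking (α : ℕ → ℝ) : Prop :=
  (∀ n, 0 < α n) ∧ (∀ m n : ℕ, m ≤ n → α n ≤ α m) ∧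
    Filter.Tendsto α Filter.atTop (nhds 0)

-- The distance `d_α(x,y) = α (v(x,y))` associated with a sequence `α`.
open Classical in
def seqDist (α : ℕ → ℝ) (x y : ℕ → Bool) : ℝ :=
  if x = y then 0 else α (seqV x y)

lemma seqV_comm (x y : ℕ → Bool) : seqV x y = seqV y x := by
  unfold seqV
  congr 1
  ext n
  exact ne_comm

lemma seqDist_self (α : ℕ → ℝ) (x : ℕ → Bool) : seqDist α x x = 0 := by
  rw [seqDist, if_pos rfl]

lemma seqDist_of_ne (α : ℕ → ℝ) {x y : ℕ → Bool} (h : x ≠ y) :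
    seqDist α x y = α (seqV x y) := by
  rw [seqDist, if_neg h]

lemma seqDist_nonneg {α : ℕ → ℝ} (hα : ∀ n, 0 < α n) (x y : ℕ → Bool) :
    0 ≤ seqDist α x y := by
  rcases eq_or_ne x y with h | h
  · rw [h, seqDist_self]
  · rw [seqDist_of_ne α h]
    exact (hα _).le

lemma min_seqV_le {x y z : ℕ → Bool} (hxz : x ≠ z) :
    min (seqV x y) (seqV y z) ≤ seqV x z := by
  have hne : {n | x n ≠ z n}.Nonempty := by
    rcases Function.ne_iff.mp hxz with ⟨n, hn⟩
    exact ⟨n, hn⟩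
  have hmem : x (seqV x z) ≠ z (seqV x z) := Nat.sInf_mem hne
  rcases ne_or_eq (x (seqV x z)) (y (seqV x z)) with h | h
  · exact le_trans (min_le_left _ _) (Nat.sInf_le h)
  · have h' : y (seqV x z) ≠ z (seqV x z) := by rw [← h]; exact hmem
    exact le_trans (min_le_right _ _) (Nat.sInf_le h')

/-- The sequentially metrized Cantor space `(2^ℕ, d_α)` for a shrinking sequence `α`. -/
def seqMetricSpace (α : ℕ → ℝ) (hα : IsShrinking α) : MetricSpace (ℕ → Bool) where
  dist := seqDist α
  dist_self x := seqDist_self α x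
  dist_comm x y := by
    show seqDist α x y = seqDist α y x
    rcases eq_or_ne x y with h | h
    · rw [h]
    · rw [seqDist_of_ne α h, seqDist_of_ne α h.symm, seqV_comm]
  dist_triangle x y z := by
    show seqDist α x z ≤ seqDist α x y + seqDist α y z
    rcases eq_or_ne x z with hxz | hxz
    · rw [hxz, seqDist_self]
      exact add_nonneg (seqDist_nonneg hα.1 _ _) (seqDist_nonneg hα.1 _ _)
    rcases eq_or_ne x y with hxy | hxy
    · subst hxy
      rw [seqDist_self, zero_add]
    rcases eq_or_ne y z with hyz | hyz
    · subst hyz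
      rw [seqDist_self, add_zero]
    rw [seqDist_of_ne α hxz, seqDist_of_ne α hxy, seqDist_of_ne α hyz]
    have h1 : α (seqV x z) ≤ α (min (seqV x y) (seqV y z)) :=
      hα.2.1 _ _ (min_seqV_le hxz)
    rcases min_cases (seqV x y) (seqV y z) with ⟨he, _⟩ | ⟨he, _⟩
    · rw [he] at h1
      exact h1.trans (le_add_of_nonneg_right (hα.1 _).le)
    · rw [he] at h1
      exact h1.trans (le_add_of_nonneg_left (hα.1 _).le)
  eq_of_dist_eq_zero := by
    intro x y h
    by_contra hne
    have h' : seqDist α x y = 0 := h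
    rw [seqDist_of_ne α hne] at h'
    exact absurd h' (ne_of_gt (hα.1 _))

/-- The Assouad dimension of a metric space. -/
def assouadDim (X : Type*) [MetricSpace X] : ℝ≥0∞ :=
  sInf {d : ℝ≥0∞ | ∃ s : ℝ, 0 < s ∧ d = ENNReal.ofReal s ∧ ∃ K : ℝ, 0 < K ∧
    ∀ ε : ℝ, 0 < ε → ε < 2 → ∀ r : ℝ, 0 < r → ∀ x : X,
      ∃ c : Finset X, (c.card : ℝ) ≤ K * ε ^ (-s) ∧
        Metric.closedBall x r ⊆ ⋃ y ∈ c, Metric.closedBall y (ε * r)}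

/-- The Hausdorff dimension of (the whole of) a metric space. -/
def hausdorffDim (X : Type*) [MetricSpace X] : ℝ≥0∞ := dimH (Set.univ : Set X)

/-- The topology induced by a metric. -/
def metricTopology {X : Type*} (m : MetricSpace X) : TopologicalSpace X :=
  m.toPseudoMetricSpace.toUniformSpace.toTopologicalSpace

/-- `f : X → Y` is quasi-symmetric: for some self-homeomorphism `η` of `[0,∞)`,
`d(f x, f y)/d(f x, f z) ≤ η (d(x,y)/d(x,z))` for all distinct `x, y, z`. -/
def IsQuasiSymmetric {X Y : Type*} [MetricSpace X] [MetricSpace Y] (f : X → Y) : Prop :=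
  ∃ η : Homeomorph (Set.Ici (0 : ℝ)) (Set.Ici (0 : ℝ)),
    ∀ x y z : X, x ≠ y → x ≠ z → y ≠ z →
      dist (f x) (f y) / dist (f x) (f z) ≤
        (η ⟨dist x y / dist x z, div_nonneg dist_nonneg dist_nonneg⟩ : ℝ)

/-- Two metric spaces (given by explicit metric structures) are quasi-symmetrically
equivalent if there is a quasi-symmetric homeomorphism between them. -/
def QSEquiv (X Y : Type*) (mX : MetricSpace X) (mY : MetricSpace Y) : Prop :=
  ∃ f : @Homeomorph X Y (metricTopology mX) (metricTopology mY),
    @IsQuasiSymmetric X Y mX mY f.toEquiv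


/-- The `ℓ^∞`-product metric (the sup metric) on `X × Y`. -/
def prodMetric {X Y : Type*} (mX : MetricSpace X) (mY : MetricSpace Y) :
    MetricSpace (X × Y) :=
  letI := mX; letI := mY; Prod.metricSpaceMax

namespace S11

/-! ### Basic facts about `seqV` -/

lemma seqV_mem {x y : ℕ → Bool} (h : x ≠ y) : x (seqV x y) ≠ y (seqV x y) := by
  have hne : {n | x n ≠ y n}.Nonempty := by
    rcases Function.ne_iff.mp h with ⟨n, hn⟩
    exact ⟨n, hn⟩
  exact Nat.sInf_mem hne

lemma seqV_agree {x y : ℕ → Bool} {i : ℕ} (h : i < seqV x y) : x i = y i := by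
  by_contra hne
  have := Nat.sInf_le (show i ∈ {n | x n ≠ y n} from hne)
  rw [show sInf {n | x n ≠ y n} = seqV x y from rfl] at this
  omega

lemma seqV_le {x y : ℕ → Bool} {n : ℕ} (h : x n ≠ y n) : seqV x y ≤ n :=
  Nat.sInf_le h

/-! ### The weight exponent `gg` -/

/-- least `true` index -/
noncomputable def jj (x : ℕ → Bool) : ℕ := sInf {i | x i = true}

lemma jj_spec {x : ℕ → Bool} {i : ℕ} (h : x i = true) :
    x (jj x) = true ∧ jj x ≤ i :=
  ⟨Nat.sInf_mem (⟨i, h⟩ : {i | x i = true}.Nonempty),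
    Nat.sInf_le (show i ∈ {i | x i = true} from h)⟩

lemma jj_min {x : ℕ → Bool} {i : ℕ} (h : i < jj x) : x i = false := by
  by_contra hne
  have hi : x i = true := by simpa using hne
  have := Nat.sInf_le (show i ∈ {i | x i = true} from hi)
  rw [show sInf {i | x i = true} = jj x from rfl] at this
  omega

open Classical in
/-- weight exponent of the prefix `x|_k` -/
noncomputable def gg (x : ℕ → Bool) (k : ℕ) : ℕ :=
  if ∃ i, i < k ∧ x i = true then jj x + (k - (2 * jj x + 1)) else k

lemma gg_zero (x : ℕ → Bool) : gg x 0 = 0 := by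
  simp [gg]

lemma gg_of_exists {x : ℕ → Bool} {k : ℕ} (h : ∃ i, i < k ∧ x i = true) :
    gg x k = jj x + (k - (2 * jj x + 1)) := by
  rw [gg, if_pos h]

lemma gg_of_not_exists {x : ℕ → Bool} {k : ℕ} (h : ¬ ∃ i, i < k ∧ x i = true) :
    gg x k = k := by
  rw [gg, if_neg h]

lemma jj_lt_of_exists {x : ℕ → Bool} {k : ℕ} (h : ∃ i, i < k ∧ x i = true) :
    jj x < k ∧ x (jj x) = true := by
  obtain ⟨i, hik, hi⟩ := h
  obtain ⟨h1, h2⟩ := jj_spec hi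
  exact ⟨lt_of_le_of_lt h2 hik, h1⟩

lemma gg_prefix {x y : ℕ → Bool} {k : ℕ} (h : ∀ i, i < k → x i = y i) :
    gg x k = gg y k := by
  by_cases hx : ∃ i, i < k ∧ x i = true
  · have hy : ∃ i, i < k ∧ y i = true := by
      obtain ⟨i, hik, hi⟩ := hx
      exact ⟨i, hik, by rw [← h i hik]; exact hi⟩
    have hjx := jj_lt_of_exists hx
    have hjy := jj_lt_of_exists hy
    have hxy : jj x = jj y := by
      have h1 : jj y ≤ jj x := (jj_spec (by rw [← h _ hjx.1]; exact hjx.2)).2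
      have h2 : jj x ≤ jj y := (jj_spec (by rw [h _ hjy.1]; exact hjy.2)).2
      omega
    rw [gg_of_exists hx, gg_of_exists hy, hxy]
  · have hy : ¬ ∃ i, i < k ∧ y i = true := by
      rintro ⟨i, hik, hi⟩
      exact hx ⟨i, hik, by rw [h i hik]; exact hi⟩
    rw [gg_of_not_exists hx, gg_of_not_exists hy]

lemma gg_succ (x : ℕ → Bool) (k : ℕ) :
    gg x k ≤ gg x (k + 1) ∧ gg x (k + 1) ≤ gg x k + 1 := by
  by_cases h1 : ∃ i, i < k + 1 ∧ x i = true
  · rw [gg_of_exists h1]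
    by_cases h0 : ∃ i, i < k ∧ x i = true
    · rw [gg_of_exists h0]
      omega
    · -- first true index is exactly k
      rw [gg_of_not_exists h0]
      have hj := jj_lt_of_exists h1
      have : k ≤ jj x := by
        by_contra hc
        exact h0 ⟨jj x, by omega, hj.2⟩
      have : jj x = k := by omega
      omega
  · have h0 : ¬ ∃ i, i < k ∧ x i = true := by
      rintro ⟨i, hik, hi⟩
      exact h1 ⟨i, by omega, hi⟩
    rw [gg_of_not_exists h1, gg_of_not_exists h0]
    omega

lemma gg_mono (x : ℕ → Bool) : Monotone (gg x) := by
  apply monotone_nat_of_le_succ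
  exact fun n => (gg_succ x n).1

lemma gg_lower (x : ℕ → Bool) (k : ℕ) : k ≤ 2 * gg x k + 1 := by
  by_cases h : ∃ i, i < k ∧ x i = true
  · rw [gg_of_exists h]
    omega
  · rw [gg_of_not_exists h]
    omega

/-! ### The distance -/

open Classical in
noncomputable def dd (x y : ℕ → Bool) : ℝ :=
  if x = y then 0 else (3 : ℝ)⁻¹ ^ gg x (seqV x y)

lemma dd_self (x : ℕ → Bool) : dd x x = 0 := by simp [dd]

lemma dd_of_ne {x y : ℕ → Bool} (h : x ≠ y) :
    dd x y = (3 : ℝ)⁻¹ ^ gg x (seqV x y) := by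
  rw [dd, if_neg h]

lemma third_pos : (0:ℝ) < 3⁻¹ := by norm_num

lemma third_pow_le {m n : ℕ} (h : m ≤ n) : (3:ℝ)⁻¹ ^ n ≤ 3⁻¹ ^ m :=
  pow_le_pow_of_le_one (by norm_num) (by norm_num) h

lemma dd_pos {x y : ℕ → Bool} (h : x ≠ y) : 0 < dd x y := by
  rw [dd_of_ne h]; positivity

lemma dd_nonneg (x y : ℕ → Bool) : 0 ≤ dd x y := by
  rcases eq_or_ne x y with h | h
  · simp [h, dd_self]
  · exact (dd_pos h).le

lemma dd_comm (x y : ℕ → Bool) : dd x y = dd y x := by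
  rcases eq_or_ne x y with h | h
  · simp [h]
  · rw [dd_of_ne h, dd_of_ne h.symm, seqV_comm,
      gg_prefix (fun i hi => seqV_agree (by rwa [seqV_comm]))]

lemma dd_le_one (x y : ℕ → Bool) : dd x y ≤ 1 := by
  rcases eq_or_ne x y with h | h
  · simp [h, dd_self]
  · rw [dd_of_ne h]
    calc (3:ℝ)⁻¹ ^ gg x (seqV x y) ≤ 3⁻¹ ^ 0 := third_pow_le (Nat.zero_le _)
    _ = 1 := pow_zero _

/-- key ultrametric inequality -/
lemma dd_ultra (x y z : ℕ → Bool) : dd x z ≤ max (dd x y) (dd y z) := by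
  rcases eq_or_ne x z with hxz | hxz
  · subst hxz; rw [dd_self]; exact le_max_of_le_left (dd_nonneg _ _)
  rcases eq_or_ne x y with hxy | hxy
  · subst hxy; exact le_max_of_le_right le_rfl
  rcases eq_or_ne y z with hyz | hyz
  · subst hyz; exact le_max_of_le_left le_rfl
  rw [dd_of_ne hxz, dd_of_ne hxy, dd_of_ne hyz]
  have hmin : min (seqV x y) (seqV y z) ≤ seqV x z := min_seqV_le hxz
  rcases le_total (seqV x y) (seqV y z) with hc | hc
  · apply le_max_of_le_left
    apply third_pow_le
    exact gg_mono x (by omega)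
  · apply le_max_of_le_right
    have h1 : gg x (seqV y z) = gg y (seqV y z) :=
      gg_prefix (fun i hi => seqV_agree (lt_of_lt_of_le hi hc))
    calc (3:ℝ)⁻¹ ^ gg x (seqV x z) ≤ 3⁻¹ ^ gg x (seqV y z) :=
          third_pow_le (gg_mono x (by omega))
    _ = 3⁻¹ ^ gg y (seqV y z) := by rw [h1]

/-! ### The metric space -/

def XX : Type := ℕ → Bool

noncomputable instance : MetricSpace XX where
  dist := dd
  dist_self := dd_self
  dist_comm := dd_comm
  dist_triangle x y z := by
    refine (dd_ultra x y z).trans ?_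
    rcases max_cases (dd x y) (dd y z) with ⟨h, _⟩ | ⟨h, _⟩ <;> rw [h]
    · exact le_add_of_nonneg_right (dd_nonneg _ _)
    · exact le_add_of_nonneg_left (dd_nonneg _ _)
  eq_of_dist_eq_zero := by
    intro x y h
    by_contra hne
    exact absurd h (ne_of_gt (dd_pos hne))

lemma dist_eq (x y : XX) : dist x y = dd x y := rfl

lemma dist_ultra (x y z : XX) : dist x z ≤ max (dist x y) (dist y z) :=
  dd_ultra x y z

end S11
namespace S11

lemma exists_pow_gg_lt (x : ℕ → Bool) {ε : ℝ} (hε : 0 < ε) :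
    ∃ k, (3:ℝ)⁻¹ ^ gg x k < ε := by
  obtain ⟨m, hm⟩ := exists_pow_lt_of_lt_one hε (show (3:ℝ)⁻¹ < 1 by norm_num)
  refine ⟨2 * m + 1, lt_of_le_of_lt ?_ hm⟩
  apply third_pow_le
  have := gg_lower x (2 * m + 1)
  omega

lemma agree_of_dd_lt {x y : ℕ → Bool} {k : ℕ}
    (h : dd x y < (3:ℝ)⁻¹ ^ gg x k) : ∀ i, i < k → x i = y i := by
  intro i hik
  rcases eq_or_ne x y with he | he
  · rw [he]
  by_contra hne
  have hv : seqV x y ≤ i := seqV_le hne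
  have : (3:ℝ)⁻¹ ^ gg x k ≤ 3⁻¹ ^ gg x (seqV x y) := third_pow_le (gg_mono x (by omega))
  rw [dd_of_ne he] at h
  linarith

lemma dd_le_of_agree {x y : ℕ → Bool} {k : ℕ}
    (h : ∀ i, i < k → x i = y i) : dd x y ≤ (3:ℝ)⁻¹ ^ gg x k := by
  rcases eq_or_ne x y with he | he
  · rw [he, dd_self]; positivity
  have hv : k ≤ seqV x y := by
    by_contra hc
    exact absurd (h _ (by omega)) (seqV_mem he)
  rw [dd_of_ne he]
  exact third_pow_le (gg_mono x hv)

/-- cylinders are open -/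
lemma isOpen_cyl (x : XX) (k : ℕ) : IsOpen {y : XX | ∀ i, i < k → y i = x i} := by
  rw [Metric.isOpen_iff]
  intro y hy
  refine ⟨(3:ℝ)⁻¹ ^ gg y k, by positivity, ?_⟩
  intro z hz
  rw [Metric.mem_ball, dist_comm] at hz
  intro i hik
  rw [← agree_of_dd_lt hz i hik]
  exact hy i hik

def flipAt (x : ℕ → Bool) (k : ℕ) : ℕ → Bool := fun i => if i = k then !(x i) else x i

lemma flip_ne (x : ℕ → Bool) (k : ℕ) : x ≠ flipAt x k := by
  intro h
  have := congrFun h k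
  simp [flipAt] at this

lemma seqV_flip (x : ℕ → Bool) (k : ℕ) : seqV x (flipAt x k) = k := by
  have h1 : seqV x (flipAt x k) ≤ k := by
    apply seqV_le
    simp [flipAt]
  have h2 : ¬ (seqV x (flipAt x k) < k) := by
    intro hc
    have := seqV_mem (flip_ne x k)
    rw [show flipAt x k (seqV x (flipAt x k)) = x (seqV x (flipAt x k)) by
      simp [flipAt]; intro he; omega] at this
    exact this rfl
  omega

lemma dd_flip (x : ℕ → Bool) (k : ℕ) :
    dd x (flipAt x k) = (3:ℝ)⁻¹ ^ gg x k := by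
  rw [dd_of_ne (flip_ne x k), seqV_flip]

/-- the special point -/
def pp : XX := fun _ => false

lemma diam_XX : Metric.diam (Set.univ : Set XX) = 1 := by
  apply le_antisymm
  · exact Metric.diam_le_of_forall_dist_le zero_le_one (fun x _ y _ => dd_le_one x y)
  · have hb : Bornology.IsBounded (Set.univ : Set XX) := by
      rw [Metric.isBounded_iff]
      exact ⟨2, fun x _ y _ => (dd_le_one x y).trans one_le_two⟩
    have h1 : dist pp (flipAt pp 0) = 1 := by
      erw [dist_eq, dd_flip, gg_zero, pow_zero]
    calc (1:ℝ) = dist pp (flipAt pp 0) := h1.symm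
    _ ≤ Metric.diam (Set.univ : Set XX) :=
        Metric.dist_le_diam_of_mem hb (Set.mem_univ _) (Set.mem_univ _)

lemma XX_perfect : IsUniformlyPerfectWith XX (1/3) := by
  intro x r hr0 hrd
  rw [diam_XX] at hrd
  have hex : {k | (3:ℝ)⁻¹ ^ gg (x : ℕ → Bool) k ≤ r}.Nonempty := by
    obtain ⟨k, hk⟩ := exists_pow_gg_lt x hr0
    exact ⟨k, hk.le⟩
  obtain ⟨K', hKmem, hK'⟩ : ∃ K', (3:ℝ)⁻¹ ^ gg (x : ℕ → Bool) (K' + 1) ≤ r ∧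
      r < (3:ℝ)⁻¹ ^ gg (x : ℕ → Bool) K' := by
    have hKmem : (3:ℝ)⁻¹ ^ gg (x : ℕ → Bool) (sInf {k | (3:ℝ)⁻¹ ^ gg (x : ℕ → Bool) k ≤ r}) ≤ r :=
      Nat.sInf_mem hex
    have hK0 : sInf {k | (3:ℝ)⁻¹ ^ gg (x : ℕ → Bool) k ≤ r} ≠ 0 := by
      intro h
      erw [h, gg_zero, pow_zero] at hKmem
      linarith
    refine ⟨sInf {k | (3:ℝ)⁻¹ ^ gg (x : ℕ → Bool) k ≤ r} - 1, ?_, ?_⟩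
    · rw [show sInf {k | (3:ℝ)⁻¹ ^ gg (x : ℕ → Bool) k ≤ r} - 1 + 1 =
        sInf {k | (3:ℝ)⁻¹ ^ gg (x : ℕ → Bool) k ≤ r} by omega]
      exact hKmem
    · have := Nat.notMem_of_lt_sInf
        (show sInf {k | (3:ℝ)⁻¹ ^ gg (x : ℕ → Bool) k ≤ r} - 1 <
          sInf {k | (3:ℝ)⁻¹ ^ gg (x : ℕ → Bool) k ≤ r} by omega)
      exact not_le.mp this
  have hlow : r / 3 < (3:ℝ)⁻¹ ^ gg (x : ℕ → Bool) (K' + 1) := by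
    have h2 : gg (x : ℕ → Bool) (K' + 1) ≤ gg (x : ℕ → Bool) K' + 1 := (gg_succ _ _).2
    have h3 : (3:ℝ)⁻¹ ^ (gg (x : ℕ → Bool) K' + 1) ≤ 3⁻¹ ^ gg (x : ℕ → Bool) (K' + 1) :=
      third_pow_le h2
    rw [pow_succ] at h3
    nlinarith [hK']
  refine ⟨flipAt x (K' + 1), ?_, ?_⟩
  · erw [Metric.mem_closedBall, dist_comm, dist_eq, dd_flip]
    exact hKmem
  · erw [Metric.mem_ball, dist_comm, dist_eq, dd_flip]
    intro hc
    have : (1/3) * r = r / 3 := by ring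
    linarith [hc.trans_le (le_of_eq this)]

lemma XX_ud : IsUniformlyDisconnectedWith XX (1/2) := by
  intro N x hchain
  have key : ∀ i, i ≤ N → dist (x 0) (x i) ≤ (1/2) * dist (x 0) (x N) := by
    intro i
    induction i with
    | zero =>
      intro _
      rw [dist_self]
      have := dist_nonneg (x := x 0) (y := x N)
      linarith
    | succ n ih =>
      intro h
      have h1 := ih (by omega)
      have h2 := hchain (n + 1) (by omega) h
      rw [show n + 1 - 1 = n from rfl] at h2
      calc dist (x 0) (x (n + 1)) ≤ max (dist (x 0) (x n)) (dist (x n) (x (n + 1))) :=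
            dist_ultra _ _ _
      _ ≤ (1/2) * dist (x 0) (x N) := max_le h1 h2
  have hN0 : dist (x 0) (x N) = 0 := by
    have h1 := key N le_rfl
    have h2 := dist_nonneg (x := x 0) (y := x N)
    linarith
  intro i hi
  have h1 := key i hi
  rw [hN0] at h1
  have : dist (x 0) (x i) ≤ 0 := by linarith
  exact (dist_le_zero.mp this).symm

end S11
namespace S11

/-! ### Cluster points -/

/-- A family of `n+1` points pairwise at distance `3⁻ⁿ`, all at distance `3⁻ⁿ` from `pp`. -/
def Z (n i : ℕ) : XX := fun m => if m = n ∨ (1 ≤ i ∧ m = n + i) then true else false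

lemma Z_below {n i m : ℕ} (h : m < n) : Z n i m = false := by
  show (if m = n ∨ 1 ≤ i ∧ m = n + i then true else false) = false
  rw [if_neg (by omega)]

lemma Z_at {n i : ℕ} : Z n i n = true := by
  simp [Z]

lemma jj_Z (n i : ℕ) : jj (Z n i) = n := by
  have h1 : jj (Z n i) ≤ n := (jj_spec Z_at).2
  rcases Nat.lt_or_ge (jj (Z n i)) n with h | h
  · have := Z_below (i := i) h
    have h2 := (jj_spec (x := Z n i) Z_at).1
    rw [this] at h2
    exact absurd h2 (by simp)
  · omega

lemma dist_pp_Z (n i : ℕ) : dist pp (Z n i) = (3:ℝ)⁻¹ ^ n := by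
  have hne : pp ≠ Z n i := by
    intro h
    have := congrFun h n
    rw [Z_at] at this
    exact absurd this (by simp [pp])
  rw [dist_eq, dd_of_ne hne]
  have hv : seqV pp (Z n i) = n := by
    have h1 : seqV pp (Z n i) ≤ n := seqV_le (by rw [Z_at]; simp [pp])
    rcases Nat.lt_or_ge (seqV pp (Z n i)) n with h | h
    · have := seqV_mem hne
      rw [Z_below h] at this
      simp [pp] at this
    · omega
  erw [hv, gg_of_not_exists (by simp [pp])]

lemma dist_Z_lt {n i i' : ℕ} (h1 : i < i') (h2 : i' ≤ n) :
    dist (Z n i) (Z n i') = (3:ℝ)⁻¹ ^ n := by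
  have hd : Z n i (n + i') ≠ Z n i' (n + i') := by
    have e1 : Z n i (n + i') = false := by
      show (if n + i' = n ∨ 1 ≤ i ∧ n + i' = n + i then true else false) = false
      rw [if_neg (by omega)]
    have e2 : Z n i' (n + i') = true := by
      show (if n + i' = n ∨ 1 ≤ i' ∧ n + i' = n + i' then true else false) = true
      rw [if_pos (Or.inr ⟨by omega, rfl⟩)]
    rw [e1, e2]; simp
  have hne : Z n i ≠ Z n i' := fun h => hd (congrFun h _)
  have hvub : seqV (Z n i) (Z n i') ≤ n + i' := seqV_le hd
  have hvlb : n + 1 ≤ seqV (Z n i) (Z n i') := by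
    rcases Nat.lt_or_ge (seqV (Z n i) (Z n i')) (n + 1) with h | h
    · exfalso
      have hm := seqV_mem hne
      rcases Nat.lt_or_ge (seqV (Z n i) (Z n i')) n with hn | hn
      · rw [Z_below hn, Z_below hn] at hm; exact hm rfl
      · have : seqV (Z n i) (Z n i') = n := by omega
        rw [this, Z_at, Z_at] at hm; exact hm rfl
    · omega
  rw [dist_eq, dd_of_ne hne]
  have hgg : gg (Z n i) (seqV (Z n i) (Z n i')) = n := by
    rw [gg_of_exists ⟨n, by omega, Z_at⟩, jj_Z]
    omega
  rw [hgg]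

lemma dist_Z {n i i' : ℕ} (h : i ≠ i') (hi : i ≤ n) (hi' : i' ≤ n) :
    dist (Z n i) (Z n i') = (3:ℝ)⁻¹ ^ n := by
  rcases Nat.lt_or_ge i i' with hlt | hge
  · exact dist_Z_lt hlt hi'
  · rw [dist_comm]
    exact dist_Z_lt (by omega) hi

/-! ### The counting lemma -/

lemma count_lemma {Y : Type*} [MetricSpace Y]
    (hultra : ∀ u v w : Y, dist u w ≤ max (dist u v) (dist v w))
    {k : ℕ} {F : Fin k → Y} {r : ℝ} (hr : 0 < r)
    (hd : ∀ i i', i ≠ i' → dist (F i) (F i') = r)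
    {c : Finset Y} {x0 : Y} (hx0 : ∀ i, dist (F i) x0 ≤ r)
    (hcov : Metric.closedBall x0 r ⊆ ⋃ y ∈ c, Metric.closedBall y (r/2)) :
    k ≤ c.card := by
  have hmem : ∀ i, ∃ y, y ∈ c ∧ F i ∈ Metric.closedBall y (r/2) := by
    intro i
    have := hcov (Metric.mem_closedBall.mpr (hx0 i))
    simpa using this
  choose g hg1 hg2 using hmem
  have hginj : Function.Injective g := by
    intro i i' he
    by_contra hne
    have h1 : dist (F i) (g i) ≤ r/2 := Metric.mem_closedBall.mp (hg2 i)
    have h2 : dist (F i') (g i) ≤ r/2 := by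
      rw [he]; exact Metric.mem_closedBall.mp (hg2 i')
    have h3 := hultra (F i) (g i) (F i')
    rw [hd i i' hne] at h3
    rw [dist_comm] at h2
    have : r ≤ r/2 := h3.trans (max_le h1 h2)
    linarith
  calc k = Fintype.card (Fin k) := (Fintype.card_fin k).symm
  _ ≤ Fintype.card {y // y ∈ c} :=
      Fintype.card_le_of_injective (fun i => ⟨g i, hg1 i⟩)
        (fun i i' h => hginj (congrArg Subtype.val h))
  _ = c.card := Fintype.card_coe c

lemma not_doubling_XX : ¬ IsDoubling XX := by
  rintro ⟨N, hN⟩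
  set n := N + 1 with hn
  obtain ⟨c, hcard, hcov⟩ := hN (Z n 0) ((3:ℝ)⁻¹ ^ n)
  have hcount : n + 1 ≤ c.card := by
    refine count_lemma dist_ultra (r := (3:ℝ)⁻¹ ^ n) (by positivity)
      (F := fun i : Fin (n + 1) => Z n i)
      (fun i i' hii => dist_Z (fun h => hii (Fin.ext h)) i.is_le i'.is_le)
      (fun i => ?_) hcov
    show dist (Z n (i : ℕ)) (Z n 0) ≤ (3:ℝ)⁻¹ ^ n
    rcases eq_or_ne (i : ℕ) 0 with h0 | h0
    · rw [h0, dist_self]; positivity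
    · exact le_of_eq (dist_Z h0 i.is_le (Nat.zero_le _))
  omega

end S11
namespace S11

lemma pp_mem_SD : pp ∈ SD XX := by
  intro s hs
  rintro ⟨N, hN⟩
  obtain ⟨ε, hε, hball⟩ := Metric.mem_nhds_iff.mp hs
  obtain ⟨m, hm⟩ := exists_pow_lt_of_lt_one hε (show (3:ℝ)⁻¹ < 1 by norm_num)
  set n := max (N + 1) m with hn
  have hpow : (3:ℝ)⁻¹ ^ n < ε :=
    lt_of_le_of_lt (third_pow_le (le_max_right _ _)) hm
  have hmem : ∀ i, Z n i ∈ s := by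
    intro i
    apply hball
    rw [Metric.mem_ball, dist_comm, dist_pp_Z]
    exact hpow
  set F : Fin (n + 1) → ↥s := fun i => ⟨Z n (i : ℕ), hmem _⟩ with hF
  have hsubultra : ∀ u v w : ↥s, dist u w ≤ max (dist u v) (dist v w) := by
    intro u v w
    rw [Subtype.dist_eq, Subtype.dist_eq, Subtype.dist_eq]
    exact dist_ultra _ _ _
  obtain ⟨c, hcard, hcov⟩ := hN (F 0) ((3:ℝ)⁻¹ ^ n)
  have hdist : ∀ i i' : Fin (n + 1), i ≠ i' → dist (F i) (F i') = (3:ℝ)⁻¹ ^ n := by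
    intro i i' hii
    rw [hF]
    show dist (⟨Z n (i : ℕ), _⟩ : ↥s) ⟨Z n (i' : ℕ), _⟩ = _
    rw [Subtype.dist_eq]
    exact dist_Z (fun h => hii (Fin.ext h)) i.is_le i'.is_le
  have hcount : n + 1 ≤ c.card := by
    refine count_lemma hsubultra (r := (3:ℝ)⁻¹ ^ n) (by positivity) hdist
      (fun i => ?_) hcov
    rcases eq_or_ne i 0 with h0 | h0
    · rw [h0, dist_self]; positivity
    · exact le_of_eq (hdist i 0 h0)
  omega

lemma doubling_nbhd {q : XX} (hq : q ≠ pp) :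
    ∃ s ∈ nhds q, IsDoubling ↥s := by
  classical
  have hex : ∃ i, q i = true := by
    rcases Function.ne_iff.mp hq with ⟨i, hi⟩
    refine ⟨i, ?_⟩
    revert hi
    show q i ≠ pp i → _
    cases h : q i
    · simp [pp, h]
    · intro _; rfl
  set j := jj q with hj
  have hqj : q j = true := (jj_spec hex.choose_spec).1
  have hjmin : ∀ i, i < j → q i = false := fun i hi => jj_min hi
  set k0 := 2 * j + 2 with hk0
  refine ⟨{y : XX | ∀ i, i < k0 → y i = q i}, (isOpen_cyl q k0).mem_nhds (fun i _ => rfl), 2, ?_⟩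
  rintro ⟨xv, hxs⟩ r
  by_cases hr : r ≤ 0
  · refine ⟨{⟨xv, hxs⟩}, by simp, ?_⟩
    intro z hz
    simp only [Set.mem_iUnion, Finset.mem_singleton]
    refine ⟨⟨xv, hxs⟩, ⟨rfl, ?_⟩⟩
    rw [Metric.mem_closedBall] at hz ⊢
    linarith
  push_neg at hr
  -- find the right scale K
  have hexk : {t | (3:ℝ)⁻¹ ^ gg xv (k0 + t) ≤ r}.Nonempty := by
    obtain ⟨k, hk⟩ := exists_pow_gg_lt xv hr
    exact ⟨k, le_of_lt (lt_of_le_of_lt (third_pow_le (gg_mono xv (by omega))) hk)⟩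
  set K := k0 + sInf {t | (3:ℝ)⁻¹ ^ gg xv (k0 + t) ≤ r} with hK
  have hKle : (3:ℝ)⁻¹ ^ gg xv K ≤ r := Nat.sInf_mem hexk
  have hk0K : k0 ≤ K := by omega
  have hKmin : ∀ v, k0 ≤ v → v < K → r < (3:ℝ)⁻¹ ^ gg xv v := by
    intro v hv1 hv2
    have h0 := Nat.notMem_of_lt_sInf (show v - k0 < sInf {t | (3:ℝ)⁻¹ ^ gg xv (k0 + t) ≤ r} by omega)
    have h2 : ¬ ((3:ℝ)⁻¹ ^ gg xv (k0 + (v - k0)) ≤ r) := h0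
    rw [show k0 + (v - k0) = v by omega] at h2
    exact not_le.mp h2
  -- the two centers
  set y : Bool → XX := fun b i => if i < K then xv i else if i = K then b else false with hy
  have hymem : ∀ b, y b ∈ {y : XX | ∀ i, i < k0 → y i = q i} := by
    intro b i hik
    have : (i < K) := by omega
    simp only [hy, if_pos this]
    exact hxs i hik
  refine ⟨{⟨y false, hymem false⟩, ⟨y true, hymem true⟩}, (Finset.card_insert_le _ _).trans (by simp), ?_⟩
  rintro ⟨zv, hzs⟩ hz
  rw [Metric.mem_closedBall, Subtype.dist_eq] at hz
  -- z agrees with x below K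
  have hagree : ∀ i, i < K → zv i = xv i := by
    rcases eq_or_ne zv xv with he | he
    · intro i _; rw [he]
    intro i hiK
    have hvk0 : k0 ≤ seqV zv xv := by
      by_contra hc
      have := seqV_mem he
      rw [hzs _ (by omega), hxs _ (by omega)] at this
      exact this rfl
    have hvK : K ≤ seqV zv xv := by
      by_contra hc
      have h1 : gg zv (seqV zv xv) = gg xv (seqV zv xv) :=
        gg_prefix (fun i hi => seqV_agree hi)
      have h2 := hKmin (seqV zv xv) hvk0 (by omega)
      rw [← h1] at h2
      rw [dist_eq, dd_of_ne he] at hz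
      linarith
    exact seqV_agree (by omega)
  have hjz : jj zv = j := by
    have hzj : zv j = true := by rw [hzs j (by omega)]; exact hqj
    have h1 : jj zv ≤ j := (jj_spec hzj).2
    rcases Nat.lt_or_ge (jj zv) j with h | h
    · have h2 := (jj_spec hzj).1
      rw [hzs _ (by omega), hjmin _ h] at h2
      exact absurd h2 (by simp)
    · omega
  -- distance from z to the appropriate center
  have hcenter : dist (⟨zv, hzs⟩ : {y : XX // y ∈ {y : XX | ∀ i, i < k0 → y i = q i}}) ⟨y (zv K), hymem _⟩ ≤ r / 2 := by
    rw [Subtype.dist_eq]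
    show dd zv (y (zv K)) ≤ r / 2
    rcases eq_or_ne zv (y (zv K)) with he | he
    · have h0 : dd zv (y (zv K)) = dd zv zv := by rw [← he]
      erw [h0, dd_self]; linarith
    have hagree' : ∀ i, i < K + 1 → zv i = y (zv K) i := by
      intro i hi
      rcases Nat.lt_or_ge i K with h | h
      · simp only [hy, if_pos h]
        exact hagree i h
      · have : i = K := by omega
        subst this
        show zv K = if K < K then xv K else if K = K then zv K else false
        simp
    have hv : K + 1 ≤ seqV zv (y (zv K)) := by
      by_contra hc
      exact absurd (hagree' _ (by omega)) (seqV_mem he)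
    have hggs : gg zv (K + 1) = gg zv K + 1 := by
      erw [gg_of_exists ⟨j, by omega, by rw [hzs j (by omega)]; exact hqj⟩,
        gg_of_exists ⟨j, by omega, by rw [hzs j (by omega)]; exact hqj⟩, hjz]
      omega
    have hggK : gg zv K = gg xv K := gg_prefix hagree
    rw [dd_of_ne he]
    calc (3:ℝ)⁻¹ ^ gg zv (seqV zv (y (zv K))) ≤ 3⁻¹ ^ gg zv (K + 1) :=
        third_pow_le (gg_mono zv hv)
    _ = 3⁻¹ ^ gg xv K * 3⁻¹ := by rw [hggs, hggK, pow_succ]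
    _ ≤ r * 3⁻¹ := by nlinarith
    _ ≤ r / 2 := by linarith
  simp only [Set.mem_iUnion]
  have hmem2 : ∀ b, (⟨y b, hymem b⟩ : {y : XX // y ∈ {y : XX | ∀ i, i < k0 → y i = q i}}) ∈
      ({⟨y false, hymem false⟩, ⟨y true, hymem true⟩} :
        Finset {y : XX // y ∈ {y : XX | ∀ i, i < k0 → y i = q i}}) := by
    intro b
    cases b
    · exact Finset.mem_insert_self _ _
    · exact Finset.mem_insert_of_mem (Finset.mem_singleton_self _)
  exact ⟨⟨y (zv K), hymem _⟩, hmem2 _, Metric.mem_closedBall.mpr hcenter⟩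

lemma SD_eq : SD XX = {pp} := by
  ext q
  simp only [Set.mem_singleton_iff]
  constructor
  · intro hq
    by_contra hne
    obtain ⟨s, hs, hds⟩ := doubling_nbhd hne
    exact hq s hs hds
  · rintro rfl
    exact pp_mem_SD

end S11
namespace S11

def toPi : XX → (ℕ → Bool) := fun x => x
def ofPi : (ℕ → Bool) → XX := fun x => x

lemma continuous_toPi : Continuous toPi := by
  apply continuous_pi
  intro n
  rw [continuous_discrete_rng]
  intro b
  rw [Metric.isOpen_iff]
  intro x hx
  refine ⟨(3:ℝ)⁻¹ ^ gg x (n + 1), by positivity, ?_⟩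
  intro z hz
  rw [Metric.mem_ball, dist_comm, dist_eq] at hz
  have hag := agree_of_dd_lt hz n (by omega)
  show toPi z n = b
  show z n = b
  rw [← hag]
  exact hx

lemma continuous_ofPi : Continuous ofPi := by
  rw [continuous_iff_continuousAt]
  intro x
  rw [ContinuousAt, Metric.tendsto_nhds]
  intro ε hε
  obtain ⟨k, hk⟩ := exists_pow_gg_lt x hε
  have hopen : IsOpen {z : ℕ → Bool | ∀ i, i < k → z i = x i} := by
    have he : {z : ℕ → Bool | ∀ i, i < k → z i = x i} =
        ⋂ i ∈ Finset.range k, {z : ℕ → Bool | z i = x i} := by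
      ext z
      simp [Finset.mem_range]
    rw [he]
    apply isOpen_biInter_finset
    intro i _
    have he2 : {z : ℕ → Bool | z i = x i} = (fun z : ℕ → Bool => z i) ⁻¹' {x i} := rfl
    rw [he2]
    exact (isOpen_discrete _).preimage (continuous_apply i)
  filter_upwards [hopen.mem_nhds (fun i _ => rfl)] with z hz
  have : dd x z ≤ (3:ℝ)⁻¹ ^ gg x k := dd_le_of_agree (fun i hi => (hz i hi).symm)
  calc dist (ofPi z) (ofPi x) = dd x z := dd_comm z x
  _ ≤ (3:ℝ)⁻¹ ^ gg x k := this
  _ < ε := hk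

noncomputable def homeoPi : XX ≃ₜ (ℕ → Bool) where
  toFun := toPi
  invFun := ofPi
  left_inv _ := rfl
  right_inv _ := rfl
  continuous_toFun := continuous_toPi
  continuous_invFun := continuous_ofPi

end S11
namespace S11

lemma term_eq (x : ℕ → Bool) (i : ℕ) :
    2 * (if x i then (1:ℝ) else 0) / 3 ^ (i + 1) = 2 / 3 * Cardinal.cantorFunctionAux (1/3) x i := by
  cases h : x i
  · rw [Cardinal.cantorFunctionAux_false h]
    norm_num
  · rw [Cardinal.cantorFunctionAux_true h]
    rw [if_pos rfl, one_div, inv_pow, pow_succ]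
    field_simp

lemma cantorT_eq (x : ℕ → Bool) : cantorT x = 2 / 3 * Cardinal.cantorFunction (1/3) x := by
  rw [Cardinal.cantorFunction, ← tsum_mul_left, cantorT]
  exact tsum_congr (term_eq x)

lemma cantorT_summable (x : ℕ → Bool) :
    Summable (fun i : ℕ => 2 * (if x i then (1:ℝ) else 0) / 3 ^ (i + 1)) := by
  apply Summable.congr ((Cardinal.summable_cantor_function (c := (1/3:ℝ)) x (by norm_num) (by norm_num)).mul_left (2/3))
  intro i
  exact (term_eq x i).symm

lemma cantorT_nonneg (x : ℕ → Bool) : 0 ≤ cantorT x := by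
  rw [cantorT]
  apply tsum_nonneg
  intro i
  cases h : x i <;> simp [h] <;> positivity

lemma cantorFunction_top : Cardinal.cantorFunction (1/3) (fun _ => true) = 3 / 2 := by
  rw [Cardinal.cantorFunction]
  rw [tsum_congr (fun n => Cardinal.cantorFunctionAux_true (f := fun _ => true) (c := (1/3:ℝ)) rfl),
    tsum_geometric_of_lt_one (show (0:ℝ) ≤ 1/3 by norm_num) (show (1/3:ℝ) < 1 by norm_num)]
  norm_num

lemma cantorT_le_one (x : ℕ → Bool) : cantorT x ≤ 1 := by
  rw [cantorT_eq]
  have h := Cardinal.cantorFunction_le (f := x) (g := fun _ => true)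
    (show (0:ℝ) ≤ 1/3 by norm_num) (by norm_num) (fun n _ => rfl)
  rw [cantorFunction_top] at h
  have h0 : (0:ℝ) ≤ Cardinal.cantorFunction (1/3) x := by
    apply tsum_nonneg
    intro i
    exact Cardinal.cantorFunctionAux_nonneg (show (0:ℝ) ≤ 1/3 by norm_num)
  linarith

lemma cantorT_succ (x : ℕ → Bool) :
    cantorT x = (2 * (cond (x 0) (1:ℝ) 0) + cantorT (fun n => x (n + 1))) / 3 := by
  rw [cantorT_eq, cantorT_eq, Cardinal.cantorFunction_succ x (by norm_num) (by norm_num)]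
  ring

lemma cantorT_mem_pre : ∀ (n : ℕ) (x : ℕ → Bool), cantorT x ∈ preCantorSet n := by
  intro n
  induction n with
  | zero =>
    intro x
    exact ⟨cantorT_nonneg x, cantorT_le_one x⟩
  | succ n ih =>
    intro x
    rw [preCantorSet_succ]
    cases h : x 0
    · left
      refine ⟨cantorT (fun n => x (n + 1)), ih _, ?_⟩
      rw [cantorT_succ x, h]
      norm_num
    · right
      refine ⟨cantorT (fun n => x (n + 1)), ih _, ?_⟩
      rw [cantorT_succ x, h]
      norm_num

lemma cantorT_mem (x : ℕ → Bool) : cantorT x ∈ cantorSet :=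
  Set.mem_iInter.mpr (fun n => cantorT_mem_pre n x)

lemma cantorT_inj : Function.Injective cantorT := by
  intro a b h
  apply Cardinal.cantorFunction_injective (show (0:ℝ) < 1/3 by norm_num) (by norm_num)
  rw [cantorT_eq, cantorT_eq] at h
  exact mul_left_cancel₀ (by norm_num) h

/-! ### Surjectivity -/

lemma preCantorSet_subset_Icc : ∀ n, preCantorSet n ⊆ Set.Icc (0:ℝ) 1 := by
  intro n
  induction n with
  | zero => exact subset_rfl
  | succ n ih =>
    rintro z (⟨w, hw, rfl⟩ | ⟨w, hw, rfl⟩)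
    · obtain ⟨h1, h2⟩ := ih hw
      constructor <;> [linarith; linarith]
    · obtain ⟨h1, h2⟩ := ih hw
      constructor <;> [linarith; linarith]

lemma cantor_step_lt {y : ℝ} (hy : y ∈ cantorSet) (h : ¬ (1/2 ≤ y)) : 3 * y ∈ cantorSet := by
  rw [cantorSet, Set.mem_iInter] at hy ⊢
  intro n
  rcases hy (n + 1) with ⟨w, hw, hwe⟩ | ⟨w, hw, hwe⟩
  · rw [show 3 * y = w by simp only at hwe; linarith]
    exact hw
  · exfalso
    obtain ⟨h1, _⟩ := preCantorSet_subset_Icc n hw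
    simp only at hwe
    push_neg at h
    linarith

lemma cantor_step_ge {y : ℝ} (hy : y ∈ cantorSet) (h : 1/2 ≤ y) : 3 * y - 2 ∈ cantorSet := by
  rw [cantorSet, Set.mem_iInter] at hy ⊢
  intro n
  rcases hy (n + 1) with ⟨w, hw, hwe⟩ | ⟨w, hw, hwe⟩
  · exfalso
    obtain ⟨_, h2⟩ := preCantorSet_subset_Icc n hw
    simp only at hwe
    linarith
  · rw [show 3 * y - 2 = w by simp only at hwe; linarith]
    exact hw

noncomputable def YY (y : ℝ) : ℕ → ℝ
  | 0 => y
  | (k + 1) => if 1/2 ≤ YY y k then 3 * YY y k - 2 else 3 * YY y k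

noncomputable def dig (y : ℝ) (k : ℕ) : Bool := if 1/2 ≤ YY y k then true else false

lemma YY_mem {y : ℝ} (hy : y ∈ cantorSet) : ∀ k, YY y k ∈ cantorSet := by
  intro k
  induction k with
  | zero => exact hy
  | succ k ih =>
    show (if 1/2 ≤ YY y k then 3 * YY y k - 2 else 3 * YY y k) ∈ cantorSet
    by_cases h : 1/2 ≤ YY y k
    · rw [if_pos h]; exact cantor_step_ge ih h
    · rw [if_neg h]; exact cantor_step_lt ih h

lemma YY_sum {y : ℝ} (hy : y ∈ cantorSet) (n : ℕ) :
    y = (∑ i ∈ Finset.range n, 2 * (if dig y i then (1:ℝ) else 0) / 3 ^ (i + 1))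
      + YY y n / 3 ^ n := by
  induction n with
  | zero => simp [YY]
  | succ n ih =>
    rw [Finset.sum_range_succ]
    have hstep : 2 * (if dig y n then (1:ℝ) else 0) / 3 ^ (n + 1) + YY y (n + 1) / 3 ^ (n + 1)
        = YY y n / 3 ^ n := by
      have hY : YY y (n + 1) = if 1/2 ≤ YY y n then 3 * YY y n - 2 else 3 * YY y n := rfl
      by_cases h : 1/2 ≤ YY y n
      · rw [hY, if_pos h, dig, if_pos h, if_pos rfl, pow_succ]
        have h3 : (3:ℝ) ^ n > 0 := by positivity
        field_simp
        ring
      · rw [hY, if_neg h, dig, if_neg h, if_neg (by simp), pow_succ]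
        have h3 : (3:ℝ) ^ n > 0 := by positivity
        field_simp
        ring
    linarith [ih]

lemma cantorT_dig {y : ℝ} (hy : y ∈ cantorSet) : cantorT (dig y) = y := by
  have h1 : Filter.Tendsto
      (fun n => ∑ i ∈ Finset.range n, 2 * (if dig y i then (1:ℝ) else 0) / 3 ^ (i + 1))
      Filter.atTop (nhds (cantorT (dig y))) :=
    (cantorT_summable (dig y)).hasSum.tendsto_sum_nat
  have h3 : Filter.Tendsto (fun n => YY y n / 3 ^ n) Filter.atTop (nhds 0) := by
    apply squeeze_zero (g := fun n => (1/3:ℝ) ^ n)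
    · intro n
      have := (cantorSet_subset_unitInterval (YY_mem hy n)).1
      positivity
    · intro n
      have hle := (cantorSet_subset_unitInterval (YY_mem hy n)).2
      rw [show (1/3:ℝ) ^ n = 1 / 3 ^ n by rw [one_div_pow]]
      calc YY y n / 3 ^ n ≤ 1 / 3 ^ n := by gcongr
      _ = 1 / 3 ^ n := rfl
    · exact tendsto_pow_atTop_nhds_zero_of_lt_one (by norm_num) (by norm_num)
  have h2 : Filter.Tendsto
      (fun n => ∑ i ∈ Finset.range n, 2 * (if dig y i then (1:ℝ) else 0) / 3 ^ (i + 1))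
      Filter.atTop (nhds y) := by
    have h4 : (fun n => ∑ i ∈ Finset.range n, 2 * (if dig y i then (1:ℝ) else 0) / 3 ^ (i + 1))
        = fun n => y - YY y n / 3 ^ n := by
      funext n
      have := YY_sum hy n
      linarith
    rw [h4]
    simpa using tendsto_const_nhds.sub h3
  exact tendsto_nhds_unique h1 h2

/-! ### Continuity and the homeomorphism -/

lemma cantorT_cont : Continuous cantorT := by
  apply continuous_tsum (u := fun i => 2 * (1/3:ℝ) ^ (i + 1))
  · intro i
    have hc : Continuous fun x : ℕ → Bool => (if x i then (1:ℝ) else 0) :=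
      Continuous.comp (continuous_of_discreteTopology (f := fun b : Bool => if b then (1:ℝ) else 0))
        (continuous_apply i)
    exact (continuous_const.mul hc).div_const _
  · apply Summable.congr ((summable_geometric_of_lt_one
      (show (0:ℝ) ≤ 1/3 by norm_num) (by norm_num)).mul_left (2/3))
    intro i
    rw [pow_succ]
    ring
  · intro n x
    rw [Real.norm_eq_abs]
    cases h : x n
    · rw [if_neg (by simp)]
      simp only [mul_zero, zero_div, abs_zero]
      positivity
    · simp only [h, if_pos]
      rw [abs_of_nonneg (by positivity)]
      apply le_of_eq
      rw [one_div_pow]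
      ring

noncomputable def TC : (ℕ → Bool) → ↥cantorSet := fun x => ⟨cantorT x, cantorT_mem x⟩

lemma TC_bij : Function.Bijective TC := by
  constructor
  · intro a b h
    exact cantorT_inj (congrArg Subtype.val h)
  · rintro ⟨y, hy⟩
    exact ⟨dig y, Subtype.ext (cantorT_dig hy)⟩

noncomputable def homeoCantor : (ℕ → Bool) ≃ₜ ↥cantorSet :=
  Continuous.homeoOfEquivCompactToT2 (f := Equiv.ofBijective TC TC_bij)
    (cantorT_cont.subtype_mk _)

end S11
theorem statement_11 :
    ∃ (X : Type) (m : MetricSpace X),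
      @IsCantorSpace X (metricTopology m) ∧
      @HasType X m false true true ∧
      ∃ p : X, @SD X m = {p} := by
  refine ⟨S11.XX, inferInstance, ?_, ?_, S11.pp, S11.SD_eq⟩
  · exact ⟨S11.homeoPi.trans S11.homeoCantor⟩
  · refine ⟨iff_of_false S11.not_doubling_XX (by simp), ?_, ?_⟩
    · exact iff_of_true ⟨1/2, by norm_num, by norm_num, S11.XX_ud⟩ rfl
    · exact iff_of_true ⟨1/3, by norm_num, by norm_num, S11.XX_perfect⟩ rfl

end
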